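/- Let α, α' ∈ A₊. If the divergence functionals D_α and D_{α'} are ordinally equivalent on bounded experiments — i.e., for all bounded experiments μ, ν: D_α(μ) ≥ D_α(ν) if and only if D_{α'}(μ) ≥ D_{α'}(ν) — then α = α'. -/

import Mathlib

open MeasureTheory ProbabilityTheory
open scoped ENNReal NNReal

/-- A statistical experiment over the state space `Θ`. -/
structure Experiment (Θ : Type) : Type 1 where
  S : Type
  mS : MeasurableSpace S
  lam : Measure S
  sigmaFinite : SigmaFinite lam
  P : Θ → Measure S
  isProb : ∀ i, IsProbabilityMeasure (P i)
  ac : ∀ i, (P i).AbsolutelyContinuous lam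

attribute [instance] Experiment.mS Experiment.sigmaFinite Experiment.isProb

namespace Experiment

variable {Θ : Type}

/-- Bounded experiment: log-likelihood ratios are essentially bounded. -/
def IsBdd (μ : Experiment Θ) : Prop :=
  ∀ i j : Θ, i ≠ j →
    ∃ c : ℝ, ∀ᵐ s ∂μ.lam, |Real.log ((μ.P i).rnDeriv (μ.P j) s).toReal| ≤ c

/-- Product (bundle) of two experiments. -/
noncomputable def prodE (μ ν : Experiment Θ) : Experiment Θ where
  S := μ.S × ν.S
  mS := inferInstance
  lam := μ.lam.prod ν.lam
  sigmaFinite := inferInstance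
  P := fun i => (μ.P i).prod (ν.P i)
  isProb := fun i => inferInstance
  ac := fun i => Measure.AbsolutelyContinuous.prod (μ.ac i) (ν.ac i)

/-- A fully uninformative one-signal experiment. -/
noncomputable def triv (Θ : Type) : Experiment Θ where
  S := Unit
  mS := inferInstance
  lam := Measure.dirac ()
  sigmaFinite := inferInstance
  P := fun _ => Measure.dirac ()
  isProb := fun _ => inferInstance
  ac := fun _ => Measure.AbsolutelyContinuous.rfl

/-- k-fold independent product μ^{⊗k}. -/
noncomputable def pow (μ : Experiment Θ) : ℕ → Experiment Θ
  | 0 => triv Θ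
  | 1 => μ
  | (k+2) => (μ.pow (k+1)).prodE μ

/-- Mixture a·μ + (1-a)·ν of two experiments (on the disjoint union of signal spaces). -/
noncomputable def mix (a : ℝ) (μ ν : Experiment Θ) (h0 : 0 ≤ a) (h1 : a ≤ 1) :
    Experiment Θ where
  S := μ.S ⊕ ν.S
  mS := inferInstance
  lam := μ.lam.map Sum.inl + ν.lam.map Sum.inr
  sigmaFinite := by
    have embl : MeasurableEmbedding (Sum.inl : μ.S → μ.S ⊕ ν.S) :=
      ⟨Sum.inl_injective, measurable_inl, fun _ hs => hs.inl_image⟩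
    have embr : MeasurableEmbedding (Sum.inr : ν.S → μ.S ⊕ ν.S) :=
      ⟨Sum.inr_injective, measurable_inr, fun _ hs => hs.inr_image⟩
    have h1 : SigmaFinite (μ.lam.map Sum.inl) := embl.sigmaFinite_map
    have h2 : SigmaFinite (ν.lam.map Sum.inr) := embr.sigmaFinite_map
    infer_instance
  P := fun i => ENNReal.ofReal a • (μ.P i).map Sum.inl
        + ENNReal.ofReal (1-a) • (ν.P i).map Sum.inr
  isProb := fun i => by
    haveI := μ.isProb i
    haveI := ν.isProb i
    constructor
    rw [Measure.add_apply, Measure.smul_apply, Measure.smul_apply,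
      Measure.map_apply measurable_inl MeasurableSet.univ,
      Measure.map_apply measurable_inr MeasurableSet.univ]
    simp only [Set.preimage_univ, measure_univ, smul_eq_mul, mul_one]
    rw [← ENNReal.ofReal_add h0 (by linarith)]
    norm_num
  ac := fun i => by
    have hl1 : (μ.P i).map Sum.inl ≪ μ.lam.map Sum.inl + ν.lam.map Sum.inr :=
      ((μ.ac i).map measurable_inl).trans
        (Measure.absolutelyContinuous_of_le (Measure.le_add_right le_rfl))
    have hl2 : (ν.P i).map Sum.inr ≪ μ.lam.map Sum.inl + ν.lam.map Sum.inr :=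
      ((ν.ac i).map measurable_inr).trans
        (Measure.absolutelyContinuous_of_le (Measure.le_add_left le_rfl))
    intro s hs
    simp only [Measure.add_apply, Measure.smul_apply, smul_eq_mul]
    rw [hl1 hs, hl2 hs]
    simp

/-- Blackwell dominance via a Markov kernel (garbling). -/
def Blackwell (μ ν : Experiment Θ) : Prop :=
  ∃ κ : Kernel μ.S ν.S, IsMarkovKernel κ ∧ ∀ i, ν.P i = (μ.P i).bind κ

/-- Uninformative experiment: the same signal distribution in every state. -/
def Uninformative (φ : Experiment Θ) : Prop := ∀ i j : Θ, φ.P i = φ.P j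

/-- Density of the state-i signal distribution w.r.t. the reference measure. -/
noncomputable def dens (μ : Experiment Θ) (i : Θ) (s : μ.S) : ℝ :=
  ((μ.P i).rnDeriv μ.lam s).toReal

/-- Kullback–Leibler divergence KL(μ_i ‖ μ_j). -/
noncomputable def KL (μ : Experiment Θ) (i j : Θ) : ℝ :=
  ∫ s, Real.log ((μ.P i).rnDeriv (μ.P j) s).toReal ∂(μ.P i)

end Experiment

section Div

variable {Θ : Type} [Fintype Θ] [Nonempty Θ] [DecidableEq Θ]

/-- Extended Rényi divergence D_α for a non-unit weight vector α. -/
noncomputable def Dalpha (μ : Experiment Θ) (α : Θ → ℝ) : ℝ :=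
  (1 / (Finset.univ.sup' Finset.univ_nonempty α - 1)) *
    Real.log (∫ s, ∏ i, μ.dens i s ^ α i ∂μ.lam)

end Div

section Div2

variable {Θ : Type} [Fintype Θ] [Nonempty Θ] [DecidableEq Θ]

open Experiment

/-- The set A₊ of nonnegative non-unit weight vectors summing to one. -/
def Aplus (Θ : Type) [Fintype Θ] : Set (Θ → ℝ) :=
  {α | (∀ i, 0 ≤ α i) ∧ ∑ i, α i = 1 ∧ ¬ ∃ i, α i = 1}

/-- The unified divergence D_{α,β}: the extended Rényi divergence for non-unit α, and
a β-weighted sum of KL divergences when α is the unit vector e_i. -/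
noncomputable def Dab (μ : Experiment Θ) (α β : Θ → ℝ) : ℝ :=
  if h : ∃ i, α i = 1 then
    ∑ j ∈ Finset.univ.erase h.choose, β j * μ.KL h.choose j
  else Dalpha μ α

/-- The parameter space P of pairs (α,β) of probability vectors. -/
def ParamSet (Θ : Type) [Fintype Θ] : Set ((Θ → ℝ) × (Θ → ℝ)) :=
  {p | (∀ i, 0 ≤ p.1 i) ∧ (∀ i, 0 ≤ p.2 i) ∧ ∑ i, p.1 i = 1 ∧ ∑ i, p.2 i = 1}

/-- Rényi divergence R_t(μ_i ‖ μ_j), with R_1 = KL. -/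
noncomputable def Renyi (μ : Experiment Θ) (i j : Θ) (t : ℝ) : ℝ :=
  if t = 1 then μ.KL i j
  else (1 / (t - 1)) * Real.log (∫ s, μ.dens i s ^ t * μ.dens j s ^ (1 - t) ∂μ.lam)

/-- The set Ψ of direction vectors. -/
def PsiSet (Θ : Type) [Fintype Θ] : Set (Θ → ℝ) :=
  {ψ | ∑ i, ψ i = 0 ∧ ∃ k, ψ k = 1}

/-- α^{γ,ψ} = e_k + (γ-1)ψ. -/
noncomputable def alphaGP (k : Θ) (γ : ℝ) (ψ : Θ → ℝ) : Θ → ℝ :=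
  fun i => (if i = k then (1 : ℝ) else 0) + (γ - 1) * ψ i

/-- The generalized divergence D_{γ,ψ} with γ ∈ [1/|Θ|, ∞] (∞ encoded as ⊤ in ℝ≥0∞). -/
noncomputable def Dgp (μ : Experiment Θ) (γ : ℝ≥0∞) (ψ : Θ → ℝ) : ℝ :=
  if h : ∃ k, ψ k = 1 then
    if γ = ⊤ then Real.log (essSup (fun s => ∏ i, μ.dens i s ^ ψ i) μ.lam)
    else if γ = 1 then ∑ l ∈ Finset.univ.erase h.choose, (-(ψ l)) * μ.KL h.choose l
    else
      (1 / (Finset.univ.sup' Finset.univ_nonempty (alphaGP h.choose γ.toReal ψ) - 1)) *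
        Real.log (∫ s, ∏ i, μ.dens i s ^ alphaGP h.choose γ.toReal ψ i ∂μ.lam)
  else 0

/-- The compact parameter space [1/|Θ|, ∞] × Ψ. -/
def GammaPsiSet (Θ : Type) [Fintype Θ] : Set (ℝ≥0∞ × (Θ → ℝ)) :=
  {p | ((Fintype.card Θ : ℝ≥0∞))⁻¹ ≤ p.1 ∧ p.2 ∈ PsiSet Θ}

/-- R_∞(μ_i ‖ μ_j) = log esssup dμ_i/dμ_j. -/
noncomputable def Rinf (μ : Experiment Θ) (i j : Θ) : ℝ :=
  Real.log (essSup (fun s => ((μ.P i).rnDeriv (μ.P j) s).toReal) μ.lam)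

end Div2

section Axioms

variable {Θ : Type}

open Experiment

/-- C is nonnegative on bounded experiments (i.e. C : 𝓔 → ℝ₊). -/
def NonnegCost (C : Experiment Θ → ℝ) : Prop := ∀ μ : Experiment Θ, μ.IsBdd → 0 ≤ C μ

def BlackwellMonotone (C : Experiment Θ → ℝ) : Prop :=
  ∀ μ ν : Experiment Θ, μ.IsBdd → ν.IsBdd → μ.Blackwell ν → C ν ≤ C μ

def SubAdditive (C : Experiment Θ → ℝ) : Prop :=
  ∀ μ ν : Experiment Θ, μ.IsBdd → ν.IsBdd → C (μ.prodE ν) ≤ C μ + C ν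

def AdditiveCost (C : Experiment Θ → ℝ) : Prop :=
  ∀ μ ν : Experiment Θ, μ.IsBdd → ν.IsBdd → C (μ.prodE ν) = C μ + C ν

def IdentityAdditive (C : Experiment Θ → ℝ) : Prop :=
  ∀ μ : Experiment Θ, μ.IsBdd → ∀ k : ℕ, 1 ≤ k → C (μ.pow k) = (k : ℝ) * C μ

def MixtureConvex (C : Experiment Θ → ℝ) : Prop :=
  ∀ μ ν : Experiment Θ, μ.IsBdd → ν.IsBdd → ∀ a : ℝ, ∀ (h0 : 0 < a) (h1 : a < 1),
    C (Experiment.mix a μ ν h0.le h1.le) ≤ a * C μ + (1 - a) * C ν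

def MixtureLinear (C : Experiment Θ → ℝ) : Prop :=
  ∀ μ ν : Experiment Θ, μ.IsBdd → ν.IsBdd → ∀ a : ℝ, ∀ (h0 : 0 < a) (h1 : a < 1),
    C (Experiment.mix a μ ν h0.le h1.le) = a * C μ + (1 - a) * C ν

def DilutionLinear (C : Experiment Θ → ℝ) : Prop :=
  ∀ μ φ : Experiment Θ, μ.IsBdd → φ.IsBdd → φ.Uninformative →
    ∀ a : ℝ, ∀ (h0 : 0 < a) (h1 : a < 1),
      C (Experiment.mix a μ φ h0.le h1.le) = a * C μ + (1 - a) * C φ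

end Axioms


section OrdAux

open MeasureTheory Experiment

variable {Θ : Type} [Fintype Θ] [Nonempty Θ] [DecidableEq Θ]

lemma ae_to_all {X : Type} [MeasurableSpace X] {μ : Measure X}
    (hpos : ∀ x : X, μ {x} ≠ 0) {p : X → Prop} (h : ∀ᵐ x ∂μ, p x) (x : X) : p x := by
  by_contra hx
  apply hpos x
  rw [ae_iff] at h
  exact le_antisymm (h ▸ measure_mono (Set.singleton_subset_iff.mpr hx)) (zero_le)

/-- densities for a 3-atom experiment that is informative only about coordinate `j`. -/
noncomputable def aDens (j : Θ) (w τ : Fin 3 → ℝ) (i : Θ) (s : Fin 3) : ℝ :=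
  w s * (if i = j then τ s else 1)

lemma aDens_pos {j : Θ} {w τ : Fin 3 → ℝ} (hw : ∀ s, 0 < w s) (hτ : ∀ s, 0 < τ s)
    (i : Θ) (s : Fin 3) : 0 < aDens j w τ i s := by
  unfold aDens
  split
  · exact mul_pos (hw s) (hτ s)
  · simpa using hw s

/-- The 3-atom experiment. -/
noncomputable def aExp (j : Θ) (w τ : Fin 3 → ℝ) (hw : ∀ s, 0 < w s) (hτ : ∀ s, 0 < τ s)
    (h1 : ∑ s, w s = 1) (h2 : ∑ s, w s * τ s = 1) : Experiment Θ where
  S := Fin 3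
  mS := inferInstance
  lam := Measure.count
  sigmaFinite := inferInstance
  P := fun i => Measure.count.withDensity fun s => ENNReal.ofReal (aDens j w τ i s)
  isProb := fun i => by
    constructor
    show (Measure.count.withDensity fun s => ENNReal.ofReal (aDens j w τ i s)) Set.univ = 1
    rw [withDensity_apply _ MeasurableSet.univ, setLIntegral_univ, lintegral_fintype]
    simp only [Measure.count_singleton, mul_one]
    rw [← ENNReal.ofReal_sum_of_nonneg (fun s _ => (aDens_pos hw hτ i s).le)]
    by_cases hij : i = j
    · have hh : ∑ s : Fin 3, aDens j w τ i s = ∑ s : Fin 3, w s * τ s := by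
        unfold aDens; simp [hij]
      rw [hh, h2, ENNReal.ofReal_one]
    · have hh : ∑ s : Fin 3, aDens j w τ i s = ∑ s : Fin 3, w s := by
        unfold aDens; simp [hij]
      rw [hh, h1, ENNReal.ofReal_one]
  ac := fun i => withDensity_absolutelyContinuous _ _

variable {j : Θ} {w τ : Fin 3 → ℝ} {hw : ∀ s, 0 < w s} {hτ : ∀ s, 0 < τ s}
  {h1 : ∑ s, w s = 1} {h2 : ∑ s, w s * τ s = 1}

lemma aExp_P_singleton (i : Θ) (x : Fin 3) :
    (aExp j w τ hw hτ h1 h2).P i {x} = ENNReal.ofReal (aDens j w τ i x) := by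
  show (Measure.count.withDensity fun s => ENNReal.ofReal (aDens j w τ i s)) {x} = _
  rw [withDensity_apply _ (measurableSet_singleton x), lintegral_singleton,
    Measure.count_singleton, mul_one]

lemma aExp_P_singleton_ne (i : Θ) (x : Fin 3) :
    (aExp j w τ hw hτ h1 h2).P i {x} ≠ 0 := by
  rw [aExp_P_singleton]
  simp only [ne_eq, ENNReal.ofReal_eq_zero, not_le]
  exact aDens_pos hw hτ i x

lemma aExp_dens_eq (i : Θ) (x : Fin 3) :
    (aExp j w τ hw hτ h1 h2).dens i x = aDens j w τ i x := by
  have hae := Measure.rnDeriv_withDensity (Measure.count : Measure (Fin 3))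
    (measurable_of_countable (fun s => ENNReal.ofReal (aDens j w τ i s)))
  have hx := ae_to_all (fun y : Fin 3 => by simp [Measure.count_singleton]) hae x
  show (((aExp j w τ hw hτ h1 h2).P i).rnDeriv (aExp j w τ hw hτ h1 h2).lam x).toReal = _
  have : ((aExp j w τ hw hτ h1 h2).P i).rnDeriv (aExp j w τ hw hτ h1 h2).lam x
      = ENNReal.ofReal (aDens j w τ i x) := hx
  rw [this, ENNReal.toReal_ofReal (aDens_pos hw hτ i x).le]

lemma aExp_rnDeriv_pair (i i' : Θ) (x : Fin 3) :
    (((aExp j w τ hw hτ h1 h2).P i).rnDeriv ((aExp j w τ hw hτ h1 h2).P i')) x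
      = ENNReal.ofReal (aDens j w τ i x / aDens j w τ i' x) := by
  have hPi : (aExp j w τ hw hτ h1 h2).P i = ((aExp j w τ hw hτ h1 h2).P i').withDensity
      (fun s => ENNReal.ofReal (aDens j w τ i s / aDens j w τ i' s)) := by
    show (Measure.count : Measure (Fin 3)).withDensity (fun s : Fin 3 => ENNReal.ofReal (aDens j w τ i s))
      = ((Measure.count : Measure (Fin 3)).withDensity fun s : Fin 3 => ENNReal.ofReal (aDens j w τ i' s)).withDensity
          (fun s : Fin 3 => ENNReal.ofReal (aDens j w τ i s / aDens j w τ i' s))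
    rw [← withDensity_mul _ (measurable_of_countable _) (measurable_of_countable _)]
    congr 1
    funext s
    rw [Pi.mul_apply, ← ENNReal.ofReal_mul (aDens_pos hw hτ i' s).le]
    congr 1
    rw [mul_comm, div_mul_cancel₀ _ (aDens_pos hw hτ i' s).ne']
  have hae := Measure.rnDeriv_withDensity ((aExp j w τ hw hτ h1 h2).P i')
    (measurable_of_countable (fun s => ENNReal.ofReal (aDens j w τ i s / aDens j w τ i' s)))
  rw [hPi]
  exact ae_to_all (fun y => aExp_P_singleton_ne i' y) hae x

lemma aExp_isBdd : (aExp j w τ hw hτ h1 h2).IsBdd := by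
  intro i i' _
  have hne : ((Finset.univ : Finset (Fin 3))).Nonempty := ⟨0, Finset.mem_univ 0⟩
  refine ⟨((Finset.univ : Finset (Fin 3))).sup' hne
      (fun s : Fin 3 => (|Real.log (aDens j w τ i s / aDens j w τ i' s)| : ℝ)), ?_⟩
  have hbd : ∀ s : Fin 3,
      |Real.log ((((aExp j w τ hw hτ h1 h2).P i).rnDeriv ((aExp j w τ hw hτ h1 h2).P i')) s).toReal|
        ≤ ((Finset.univ : Finset (Fin 3))).sup' hne
            (fun s : Fin 3 => (|Real.log (aDens j w τ i s / aDens j w τ i' s)| : ℝ)) := by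
    intro s
    have hr := aExp_rnDeriv_pair (j := j) (w := w) (τ := τ) (hw := hw) (hτ := hτ)
      (h1 := h1) (h2 := h2) i i' s
    rw [hr, ENNReal.toReal_ofReal (div_nonneg (aDens_pos hw hτ i s).le (aDens_pos hw hτ i' s).le)]
    exact Finset.le_sup' (fun s : Fin 3 => (|Real.log (aDens j w τ i s / aDens j w τ i' s)| : ℝ))
      (Finset.mem_univ s)
  exact ae_of_all _ hbd

lemma aExp_Z (α : Θ → ℝ) (hs : ∑ i, α i = 1) :
    (∫ s, ∏ i, (aExp j w τ hw hτ h1 h2).dens i s ^ α i ∂(aExp j w τ hw hτ h1 h2).lam)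
      = ∑ s : Fin 3, w s * τ s ^ α j := by
  have hfun : ∀ s : Fin 3, (∏ i, (aExp j w τ hw hτ h1 h2).dens i s ^ α i) = w s * τ s ^ α j := by
    intro s
    have hd : ∀ i, (aExp j w τ hw hτ h1 h2).dens i s = aDens j w τ i s := fun i => aExp_dens_eq i s
    calc (∏ i, (aExp j w τ hw hτ h1 h2).dens i s ^ α i)
        = ∏ i, (w s * (if i = j then τ s else 1)) ^ α i := by
          refine Finset.prod_congr rfl fun i _ => ?_
          rw [hd i]; rfl
      _ = ∏ i, (w s) ^ α i * (if i = j then τ s else 1) ^ α i := by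
          refine Finset.prod_congr rfl fun i _ => ?_
          exact Real.mul_rpow (hw s).le (by split <;> [exact (hτ s).le; norm_num])
      _ = (∏ i, (w s) ^ α i) * ∏ i, (if i = j then τ s else 1) ^ α i := Finset.prod_mul_distrib
      _ = w s * τ s ^ α j := by
          congr 1
          · have : ∀ i : Θ, (w s) ^ α i = Real.exp (α i * Real.log (w s)) := by
              intro i
              rw [Real.rpow_def_of_pos (hw s), mul_comm]
            simp_rw [this]
            rw [← Real.exp_sum, ← Finset.sum_mul, hs, one_mul, Real.exp_log (hw s)]
          · rw [Finset.prod_eq_single j (fun b _ hb => by rw [if_neg hb, Real.one_rpow])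
              (fun hj => absurd (Finset.mem_univ j) hj), if_pos rfl]
  calc (∫ s, ∏ i, (aExp j w τ hw hτ h1 h2).dens i s ^ α i ∂(aExp j w τ hw hτ h1 h2).lam)
      = ∫ s : Fin 3, w s * τ s ^ α j ∂(Measure.count : Measure (Fin 3)) :=
        integral_congr_ae (Filter.Eventually.of_forall hfun)
    _ = ∑ s : Fin 3, w s * τ s ^ α j := by
        rw [integral_fintype Integrable.of_finite]
        simp [Measure.count_singleton]

lemma aExp_Dalpha (α : Θ → ℝ) (hs : ∑ i, α i = 1) :
    Dalpha (aExp j w τ hw hτ h1 h2) α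
      = (1 / (Finset.univ.sup' Finset.univ_nonempty α - 1)) *
          Real.log (∑ s : Fin 3, w s * τ s ^ α j) := by
  unfold Dalpha
  rw [aExp_Z α hs]

end OrdAux

section OrdCore

open MeasureTheory Experiment

variable {Θ : Type} [Fintype Θ] [Nonempty Θ] [DecidableEq Θ]

/-- If the `α'`-Hellinger transforms of two 3-atom experiments agree, so do the
`α`-Hellinger transforms. -/
lemma Zq_to_Zp (α α' : Θ → ℝ) (hα : α ∈ Aplus Θ) (hα' : α' ∈ Aplus Θ)
    (h : ∀ μ ν : Experiment Θ, μ.IsBdd → ν.IsBdd →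
      (Dalpha ν α ≤ Dalpha μ α ↔ Dalpha ν α' ≤ Dalpha μ α'))
    (j : Θ) (wμ τμ wν τν : Fin 3 → ℝ)
    (hwμ : ∀ s, 0 < wμ s) (hτμ : ∀ s, 0 < τμ s)
    (h1μ : ∑ s, wμ s = 1) (h2μ : ∑ s, wμ s * τμ s = 1)
    (hwν : ∀ s, 0 < wν s) (hτν : ∀ s, 0 < τν s)
    (h1ν : ∑ s, wν s = 1) (h2ν : ∑ s, wν s * τν s = 1)
    (hZq : ∑ s : Fin 3, wμ s * τμ s ^ α' j = ∑ s : Fin 3, wν s * τν s ^ α' j) :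
    ∑ s : Fin 3, wμ s * τμ s ^ α j = ∑ s : Fin 3, wν s * τν s ^ α j := by
  obtain ⟨hα0, hαs, hα1⟩ := hα
  obtain ⟨hα'0, hα's, hα'1⟩ := hα'
  have hDq : Dalpha (aExp j wμ τμ hwμ hτμ h1μ h2μ) α' = Dalpha (aExp j wν τν hwν hτν h1ν h2ν) α' := by
    rw [aExp_Dalpha α' hα's, aExp_Dalpha α' hα's, hZq]
  have hle1 := (h (aExp j wν τν hwν hτν h1ν h2ν) (aExp j wμ τμ hwμ hτμ h1μ h2μ)
    aExp_isBdd aExp_isBdd).mpr (le_of_eq hDq)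
  have hle2 := (h (aExp j wμ τμ hwμ hτμ h1μ h2μ) (aExp j wν τν hwν hτν h1ν h2ν)
    aExp_isBdd aExp_isBdd).mpr (le_of_eq hDq.symm)
  have hDp : Dalpha (aExp j wμ τμ hwμ hτμ h1μ h2μ) α = Dalpha (aExp j wν τν hwν hτν h1ν h2ν) α :=
    le_antisymm hle1 hle2
  rw [aExp_Dalpha α hαs, aExp_Dalpha α hαs] at hDp
  have hsup : Finset.univ.sup' Finset.univ_nonempty α < 1 := by
    rw [Finset.sup'_lt_iff]
    intro i _
    refine lt_of_le_of_ne ?_ (fun hh => hα1 ⟨i, hh⟩)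
    rw [← hαs]
    exact Finset.single_le_sum (fun k _ => hα0 k) (Finset.mem_univ i)
  have hCne : (1 : ℝ) / (Finset.univ.sup' Finset.univ_nonempty α - 1) ≠ 0 :=
    one_div_ne_zero (sub_ne_zero_of_ne hsup.ne)
  have hlog := mul_left_cancel₀ hCne hDp
  have hpos1 : 0 < ∑ s : Fin 3, wμ s * τμ s ^ α j :=
    Finset.sum_pos (fun s _ => mul_pos (hwμ s) (Real.rpow_pos_of_pos (hτμ s) _))
      ⟨0, Finset.mem_univ 0⟩
  have hpos2 : 0 < ∑ s : Fin 3, wν s * τν s ^ α j :=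
    Finset.sum_pos (fun s _ => mul_pos (hwν s) (Real.rpow_pos_of_pos (hτν s) _))
      ⟨0, Finset.mem_univ 0⟩
  rw [← Real.exp_log hpos1, ← Real.exp_log hpos2, hlog]

lemma core_contra (α α' : Θ → ℝ) (hα : α ∈ Aplus Θ) (hα' : α' ∈ Aplus Θ)
    (h : ∀ μ ν : Experiment Θ, μ.IsBdd → ν.IsBdd →
      (Dalpha ν α ≤ Dalpha μ α ↔ Dalpha ν α' ≤ Dalpha μ α'))
    (j : Θ) (hjne : α j ≠ α' j) (hj0 : α j ≠ 0) : False := by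
  have hp1 : α j ≠ 1 := fun hh => hα.2.2 ⟨j, hh⟩
  set V : ℝ := Real.exp (-1) with hV
  set W : ℝ := Real.exp (-(α' j)) with hW
  have hVpos : 0 < V := Real.exp_pos _
  have hWpos : 0 < W := Real.exp_pos _
  set K : ℝ := V + W + V * W with hK
  have hKpos : 0 < K := by nlinarith [mul_pos hVpos hWpos]
  have hE2 : (1:ℝ) < Real.exp 2 := by nlinarith [Real.add_one_le_exp (2:ℝ)]
  set uc : ℝ := 2 * K * (Real.exp 2 - 1) with huc
  have hucpos : 0 < uc := by nlinarith
  set c : ℝ := 1 + K + uc with hc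
  have hcpos : 0 < c := by nlinarith
  have hcne : c ≠ 0 := hcpos.ne'
  -- exp identities
  have hVE : V * Real.exp 1 = 1 := by
    rw [hV, ← Real.exp_add, show (-1:ℝ) + 1 = 0 by norm_num, Real.exp_zero]
  have hWq : W * Real.exp (α' j) = 1 := by
    rw [hW, ← Real.exp_add, show -(α' j) + α' j = 0 by ring, Real.exp_zero]
  have he2 : Real.exp 2 = Real.exp 1 * Real.exp 1 := by
    rw [show (2:ℝ) = 1 + 1 by norm_num, Real.exp_add]
  have he3 : Real.exp 3 = Real.exp 1 * Real.exp 1 * Real.exp 1 := by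
    rw [show (3:ℝ) = 1 + 1 + 1 by norm_num, Real.exp_add, Real.exp_add]
  have h1r : ∀ t : ℝ, Real.exp 1 ^ t = Real.exp t := by
    intro t; rw [← Real.exp_mul, one_mul]
  have h2r : ∀ t : ℝ, Real.exp 2 ^ t = Real.exp t * Real.exp t := by
    intro t; rw [← Real.exp_mul, show (2:ℝ) * t = t + t by ring, Real.exp_add]
  have h3r : ∀ t : ℝ, Real.exp 3 ^ t = Real.exp t * Real.exp t * Real.exp t := by
    intro t; rw [← Real.exp_mul, show (3:ℝ) * t = t + t + t by ring, Real.exp_add, Real.exp_add]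
  -- the two experiments
  have hwμ : ∀ s : Fin 3, 0 < (![1/c, K/c, uc/c] : Fin 3 → ℝ) s := by
    intro s; fin_cases s
    · exact div_pos one_pos hcpos
    · exact div_pos hKpos hcpos
    · exact div_pos hucpos hcpos
  have hτμ : ∀ s : Fin 3, 0 < (![1, Real.exp 2, 1/2] : Fin 3 → ℝ) s := by
    intro s; fin_cases s
    · exact one_pos
    · exact Real.exp_pos 2
    · norm_num
  have hwν : ∀ s : Fin 3, 0 < (![(1+V+W)/c, V*W/c, uc/c] : Fin 3 → ℝ) s := by
    intro s; fin_cases s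
    · exact div_pos (by nlinarith) hcpos
    · exact div_pos (mul_pos hVpos hWpos) hcpos
    · exact div_pos hucpos hcpos
  have hτν : ∀ s : Fin 3, 0 < (![Real.exp 1, Real.exp 3, 1/2] : Fin 3 → ℝ) s := by
    intro s; fin_cases s
    · exact Real.exp_pos 1
    · exact Real.exp_pos 3
    · norm_num
  have h1μ : ∑ s, (![1/c, K/c, uc/c] : Fin 3 → ℝ) s = 1 := by
    rw [Fin.sum_univ_three]
    show 1/c + K/c + uc/c = 1
    rw [← add_div, ← add_div, ← hc]
    exact div_self hcne
  have h2μ : ∑ s, (![1/c, K/c, uc/c] : Fin 3 → ℝ) s * (![1, Real.exp 2, 1/2] : Fin 3 → ℝ) s = 1 := by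
    rw [Fin.sum_univ_three]
    show 1/c * 1 + K/c * Real.exp 2 + uc/c * (1/2) = 1
    rw [div_mul_eq_mul_div, div_mul_eq_mul_div, div_mul_eq_mul_div,
      ← add_div, ← add_div]
    rw [show 1 * 1 + K * Real.exp 2 + uc * (1/2) = c by rw [hc, huc]; ring]
    exact div_self hcne
  have h1ν : ∑ s, (![(1+V+W)/c, V*W/c, uc/c] : Fin 3 → ℝ) s = 1 := by
    rw [Fin.sum_univ_three]
    show (1+V+W)/c + V*W/c + uc/c = 1
    rw [← add_div, ← add_div]
    rw [show 1 + V + W + V*W + uc = c by rw [hc, hK]; ring]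
    exact div_self hcne
  have h2ν : ∑ s, (![(1+V+W)/c, V*W/c, uc/c] : Fin 3 → ℝ) s *
      (![Real.exp 1, Real.exp 3, 1/2] : Fin 3 → ℝ) s = 1 := by
    rw [Fin.sum_univ_three]
    show (1+V+W)/c * Real.exp 1 + V*W/c * Real.exp 3 + uc/c * (1/2) = 1
    rw [div_mul_eq_mul_div, div_mul_eq_mul_div, div_mul_eq_mul_div,
      ← add_div, ← add_div]
    rw [show (1+V+W) * Real.exp 1 + V*W * Real.exp 3 + uc * (1/2) = c by
      rw [hc, huc, hK, he3, he2]
      linear_combination ((1 - Real.exp 1) * (1 - W * Real.exp 1)) * hVE]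
    exact div_self hcne
  -- equality of α'-transforms
  have hZμq : ∑ s : Fin 3, (![1/c, K/c, uc/c] : Fin 3 → ℝ) s *
      (![1, Real.exp 2, 1/2] : Fin 3 → ℝ) s ^ α' j
      = (1 + K * (Real.exp (α' j) * Real.exp (α' j)) + uc * ((1/2:ℝ) ^ α' j)) / c := by
    rw [Fin.sum_univ_three]
    show 1/c * (1:ℝ) ^ α' j + K/c * Real.exp 2 ^ α' j + uc/c * (1/2:ℝ) ^ α' j = _
    rw [Real.one_rpow, h2r]
    ring
  have hZνq : ∑ s : Fin 3, (![(1+V+W)/c, V*W/c, uc/c] : Fin 3 → ℝ) s *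
      (![Real.exp 1, Real.exp 3, 1/2] : Fin 3 → ℝ) s ^ α' j
      = ((1+V+W) * Real.exp (α' j) +
          V*W * (Real.exp (α' j) * Real.exp (α' j) * Real.exp (α' j)) + uc * ((1/2:ℝ) ^ α' j)) / c := by
    rw [Fin.sum_univ_three]
    show (1+V+W)/c * Real.exp 1 ^ α' j + V*W/c * Real.exp 3 ^ α' j + uc/c * (1/2:ℝ) ^ α' j = _
    rw [h1r, h3r]
    ring
  have hq_eq : ∑ s : Fin 3, (![1/c, K/c, uc/c] : Fin 3 → ℝ) s *
      (![1, Real.exp 2, 1/2] : Fin 3 → ℝ) s ^ α' j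
      = ∑ s : Fin 3, (![(1+V+W)/c, V*W/c, uc/c] : Fin 3 → ℝ) s *
        (![Real.exp 1, Real.exp 3, 1/2] : Fin 3 → ℝ) s ^ α' j := by
    rw [hZμq, hZνq]
    have key : 1 + K * (Real.exp (α' j) * Real.exp (α' j))
        = (1+V+W) * Real.exp (α' j) +
          V*W * (Real.exp (α' j) * Real.exp (α' j) * Real.exp (α' j)) := by
      rw [hK]
      linear_combination (-((1 - Real.exp (α' j)) * (1 - V * Real.exp (α' j)))) * hWq
    rw [show 1 + K * (Real.exp (α' j) * Real.exp (α' j)) + uc * ((1/2:ℝ) ^ α' j)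
        = (1+V+W) * Real.exp (α' j) +
          V*W * (Real.exp (α' j) * Real.exp (α' j) * Real.exp (α' j)) + uc * ((1/2:ℝ) ^ α' j) by
      linear_combination key]
  -- propagate to α
  have hZp := Zq_to_Zp α α' hα hα' h j _ _ _ _ hwμ hτμ h1μ h2μ hwν hτν h1ν h2ν hq_eq
  -- compute both sides
  have hZμp : ∑ s : Fin 3, (![1/c, K/c, uc/c] : Fin 3 → ℝ) s *
      (![1, Real.exp 2, 1/2] : Fin 3 → ℝ) s ^ α j
      = (1 + K * (Real.exp (α j) * Real.exp (α j)) + uc * ((1/2:ℝ) ^ α j)) / c := by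
    rw [Fin.sum_univ_three]
    show 1/c * (1:ℝ) ^ α j + K/c * Real.exp 2 ^ α j + uc/c * (1/2:ℝ) ^ α j = _
    rw [Real.one_rpow, h2r]
    ring
  have hZνp : ∑ s : Fin 3, (![(1+V+W)/c, V*W/c, uc/c] : Fin 3 → ℝ) s *
      (![Real.exp 1, Real.exp 3, 1/2] : Fin 3 → ℝ) s ^ α j
      = ((1+V+W) * Real.exp (α j) +
          V*W * (Real.exp (α j) * Real.exp (α j) * Real.exp (α j)) + uc * ((1/2:ℝ) ^ α j)) / c := by
    rw [Fin.sum_univ_three]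
    show (1+V+W)/c * Real.exp 1 ^ α j + V*W/c * Real.exp 3 ^ α j + uc/c * (1/2:ℝ) ^ α j = _
    rw [h1r, h3r]
    ring
  rw [hZμp, hZνp] at hZp
  rw [div_eq_div_iff hcne hcne] at hZp
  have hnum := mul_right_cancel₀ hcne hZp
  have hfac0 : (1 - Real.exp (α j)) * (1 - V * Real.exp (α j)) * (1 - W * Real.exp (α j)) = 0 := by
    rw [hK] at hnum
    linear_combination hnum
  rcases mul_eq_zero.mp hfac0 with h' | hf3
  · rcases mul_eq_zero.mp h' with hf1 | hf2
    · have hx : Real.exp (α j) = 1 := by linarith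
      exact hj0 ((Real.exp_eq_one_iff _).mp hx)
    · have hx : Real.exp (-1 + α j) = 1 := by
        rw [Real.exp_add, ← hV]; linarith
      have := (Real.exp_eq_one_iff _).mp hx
      exact hp1 (by linarith)
  · have hx : Real.exp (-(α' j) + α j) = 1 := by
      rw [Real.exp_add, ← hW]; linarith
    have := (Real.exp_eq_one_iff _).mp hx
    exact hjne (by linarith)

end OrdCore

section Stmt16

variable {Θ : Type} [Fintype Θ] [Nonempty Θ] [DecidableEq Θ]

/-- **Claim (ordinal uniqueness of Rényi divergences).** If two extended Rényi divergences
`D_α`, `D_{α'}` with `α, α' ∈ A₊` are ordinally equivalent on bounded experiments, then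
`α = α'`. -/
theorem Dalpha_ordinal_unique
    (hΘ : 2 ≤ Fintype.card Θ) (α α' : Θ → ℝ) (hα : α ∈ Aplus Θ) (hα' : α' ∈ Aplus Θ)
    (h : ∀ μ ν : Experiment Θ, μ.IsBdd → ν.IsBdd →
      (Dalpha ν α ≤ Dalpha μ α ↔ Dalpha ν α' ≤ Dalpha μ α')) :
    α = α' := by
  by_contra hne
  obtain ⟨j, hj⟩ := Function.ne_iff.mp hne
  by_cases h0 : α j = 0
  · exact core_contra α' α hα' hα (fun μ ν hμ hν => (h μ ν hμ hν).symm) j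
      (Ne.symm hj) (fun hh => hj (by rw [h0, hh]))
  · exact core_contra α α' hα hα' h j hj h0

end Stmt16
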